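/- arXiv:1003.4008 — 2 statements merged into one kernel-verified Lean document; each statement's English description precedes it below -/
import Mathlib

section
/- Given a short exact sequence 0 → L → M → N → 0 of finitely generated ℤⁿ-graded modules over the polynomial ring S = k[x₁,…,xₙ], the Stanley depth of M is at least the minimum of the Stanley depths of L and N. -/
open MvPolynomial

/-- The polynomial ring `S = k[x₁,…,xₙ]`. -/
abbrev PS (k : Type) [Field k] (n : ℕ) : Type := MvPolynomial (Fin n) k

/-- The `i`-th unit vector in `ℤⁿ`. -/
def eZ (n : ℕ) (i : Fin n) : Fin n → ℤ := fun j => if j = i then 1 else 0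

/-- Inclusion `ℕⁿ → ℤⁿ`. -/
def natDeg {n : ℕ} (d : Fin n → ℕ) : Fin n → ℤ := fun i => (d i : ℤ)

/-- Function `Fin n → ℕ` as a finitely supported function (exponent of a monomial). -/
noncomputable def toFs {n : ℕ} (d : Fin n → ℕ) : Fin n →₀ ℕ := Finsupp.equivFunOnFinite.symm d

/-- A `ℤⁿ`-grading of an `S`-module `M`: a direct sum decomposition of `M` into
`k`-subspaces compatible with multiplication by the variables. -/
structure MGrading (k : Type) [Field k] (n : ℕ) (M : Type) [AddCommGroup M]
    [Module (PS k n) M] [Module k M] [IsScalarTower k (PS k n) M] where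
  piece : (Fin n → ℤ) → Submodule k M
  indep : iSupIndep piece
  total : ⨆ d, piece d = ⊤
  smul_mem : ∀ (i : Fin n) (d : Fin n → ℤ) (m : M),
    m ∈ piece d → (X i : PS k n) • m ∈ piece (d + eZ n i)

section Core

variable {k : Type} [Field k] {n : ℕ} {M : Type} [AddCommGroup M]
  [Module (PS k n) M] [Module k M] [IsScalarTower k (PS k n) M]

/-- The `k`-subspace `m·k[Z]` spanned by the multiples of `m` by monomials in the
variables of `Z`. -/
def stanleySub (m : M) (Z : Finset (Fin n)) : Submodule k M :=
  Submodule.span k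
    {y | ∃ b : Fin n →₀ ℕ, (∀ j ∈ b.support, j ∈ Z) ∧ y = (monomial b (1 : k) : PS k n) • m}

/-- A Stanley decomposition of a `ℤⁿ`-graded module `M`: finitely many homogeneous
elements `mᵢ` and sets of variables `Zᵢ` such that each `mᵢ k[Zᵢ]` is a free Stanley
space and `M` is their direct sum as (`ℤⁿ`-graded) `k`-vector spaces. -/
structure StanleyDecomp (gr : MGrading k n M) where
  s : ℕ
  elem : Fin s → M
  deg : Fin s → (Fin n → ℤ)
  Z : Fin s → Finset (Fin n)
  homog : ∀ i, elem i ∈ gr.piece (deg i)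
  free : ∀ i, LinearIndependent k
    (fun b : {b : Fin n →₀ ℕ // ∀ j ∈ b.support, j ∈ Z i} =>
      ((monomial (b : Fin n →₀ ℕ) (1 : k) : PS k n) • elem i : M))
  indep : iSupIndep (fun i => (stanleySub (elem i) (Z i) : Submodule k M))
  total : (⨆ i, (stanleySub (elem i) (Z i) : Submodule k M)) = ⊤

/-- The Stanley depth of a `ℤⁿ`-graded module: the largest `d` such that there is a
Stanley decomposition all of whose Stanley spaces have at least `d` free variables. -/
noncomputable def sdepth (gr : MGrading k n M) : ℕ :=
  sSup {d | ∃ D : StanleyDecomp gr, ∀ i, d ≤ (D.Z i).card}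

/-- A grading is positively `a`-determined: concentrated in `ℕⁿ`, and multiplication
by `xᵢ : M_d → M_{d+eᵢ}` is bijective whenever `d i ≥ a i`. -/
structure IsPosDet (a : Fin n → ℕ) (gr : MGrading k n M) : Prop where
  nonneg : ∀ d : Fin n → ℤ, (∃ i, d i < 0) → gr.piece d = ⊥
  inj : ∀ (d : Fin n → ℕ) (i : Fin n), a i ≤ d i → ∀ m ∈ gr.piece (natDeg d),
    ∀ m' ∈ gr.piece (natDeg d),
      (X i : PS k n) • m = (X i : PS k n) • m' → m = m'
  surj : ∀ (d : Fin n → ℕ) (i : Fin n), a i ≤ d i →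
    ∀ m' ∈ gr.piece (natDeg d + eZ n i),
      ∃ m ∈ gr.piece (natDeg d), (X i : PS k n) • m = m'

/-- A Stanley decomposition is positively `a`-determined: all degrees `deg i` lie in
`[0,a]` and `{x_j : a j ≤ (deg i) j} ⊆ Z i`. -/
def StanleyDecomp.IsPosDetDecomp {gr : MGrading k n M} (a : Fin n → ℕ)
    (D : StanleyDecomp gr) : Prop :=
  ∀ i, ∃ d : Fin n → ℕ, D.deg i = natDeg d ∧ (∀ j, d j ≤ a j) ∧
    (∀ j, a j ≤ d j → j ∈ D.Z i)

/-- `#{j : a j ≤ b j}`, the cardinality of `suppᵃ(b)`. -/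
def suppCardA {n : ℕ} (a b : Fin n → ℕ) : ℕ :=
  (Finset.univ.filter (fun j => a j ≤ b j)).card

/-- `#supp(c) = #{j : c j ≥ 1}`. -/
def suppCard {n : ℕ} (c : Fin n → ℕ) : ℕ :=
  (Finset.univ.filter (fun j => 1 ≤ c j)).card

/-- `#supp(b)` for `b ∈ ℤⁿ`. -/
def suppCardZ {n : ℕ} (b : Fin n → ℤ) : ℕ :=
  (Finset.univ.filter (fun j => 1 ≤ b j)).card

/-- The set `[[c,b]]ₐ` of degrees where the interval module `kₐ[c,b]` is nonzero. -/
def intervalSet {n : ℕ} (a c b : Fin n → ℕ) : Set (Fin n → ℕ) :=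
  {d | (∀ i, c i ≤ d i) ∧ ∀ i, b i < a i → d i ≤ b i}

/-- A positively `a`-determined quasi Stanley decomposition of an (`ℕⁿ`-graded)
module `M`, encoded by the images `f i d` of the monomial basis elements `x̄^d` of the
interval modules `kₐ[cᵢ,bᵢ]` under a graded `k`-linear bijection
`⊕ᵢ kₐ[cᵢ,bᵢ] → M` satisfying `f(x̄^d) = x^{d-cᵢ}·f(x̄^{cᵢ})`. -/
structure QSDecomp (a : Fin n → ℕ) (gr : MGrading k n M) where
  s : ℕ
  c : Fin s → (Fin n → ℕ)
  b : Fin s → (Fin n → ℕ)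
  cb : ∀ i j, c i j ≤ b i j
  ba : ∀ i j, b i j ≤ a j
  f : Fin s → (Fin n → ℕ) → M
  compat : ∀ i d, d ∈ intervalSet a (c i) (b i) →
    f i d = (monomial (toFs (fun j => d j - c i j)) (1 : k) : PS k n) • f i (c i)
  mem : ∀ i d, d ∈ intervalSet a (c i) (b i) → f i d ∈ gr.piece (natDeg d)
  li : ∀ d : Fin n → ℕ, LinearIndependent k
    (fun i : {i : Fin s // d ∈ intervalSet a (c i) (b i)} => (f (i : Fin s) d : M))
  span : ∀ d : Fin n → ℕ, gr.piece (natDeg d) =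
    Submodule.span k {y | ∃ i : Fin s, d ∈ intervalSet a (c i) (b i) ∧ y = f i d}

/-- `shreg` computed via positively `a`-determined quasi Stanley decompositions. -/
noncomputable def shregA (a : Fin n → ℕ) (gr : MGrading k n M) : ℕ :=
  sInf {r | ∃ D : QSDecomp a gr, ∀ i, suppCard (D.c i) ≤ r}

/-- `shreg(M)`: minimum over all quasi Stanley decompositions (for all `a`) of the
maximal support-cardinality of the bottom degrees `cᵢ`. -/
noncomputable def shreg (gr : MGrading k n M) : ℕ :=
  sInf {r | ∃ a : Fin n → ℕ, ∃ D : QSDecomp a gr, ∀ i, suppCard (D.c i) ≤ r}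

end Core

/-- Depth of an `S`-module with respect to the ideal `(x₁,…,xₙ)`: the supremum of
lengths of regular sequences consisting of elements of `(x₁,…,xₙ)`. -/
noncomputable def mdepth (k : Type) [Field k] (n : ℕ) (M : Type) [AddCommGroup M]
    [Module (PS k n) M] : ℕ :=
  sSup {d | ∃ rs : List (PS k n), rs.length = d ∧
    (∀ r ∈ rs, r ∈ Ideal.span (Set.range (X : Fin n → PS k n))) ∧
    RingTheory.Sequence.IsRegular M rs}

/-- Krull dimension of an `S`-module, i.e. the Krull dimension of `S/ann(M)`. -/
noncomputable def mdim (k : Type) [Field k] (n : ℕ) (M : Type) [AddCommGroup M]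
    [Module (PS k n) M] : WithBot (WithTop ℕ) :=
  ringKrullDim (PS k n ⧸ Module.annihilator (PS k n) M)

/-- An `S`-module is Cohen–Macaulay if its depth equals its Krull dimension. -/
def IsCMmod (k : Type) [Field k] (n : ℕ) (M : Type) [AddCommGroup M]
    [Module (PS k n) M] : Prop :=
  (mdepth k n M : WithBot (WithTop ℕ)) = mdim k n M

/-- The defining ideal of the interval module `kₐ[c,b]`:
generated by `xᵢ^{bᵢ-cᵢ+1}` for the `i` with `bᵢ < aᵢ`. -/
noncomputable def intervalIdeal (k : Type) [Field k] {n : ℕ} (a c b : Fin n → ℕ) : Ideal (PS k n) :=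
  Ideal.span {p | ∃ i, b i < a i ∧ p = (X i : PS k n) ^ (b i - c i + 1)}

/-- The interval module `kₐ[c,b] = x^c · S/(xᵢ^{bᵢ+1} : bᵢ < aᵢ)`, realized (up to the
degree shift by `c`, which is recorded in the grading `intervalPiece`) as the quotient
`S/(xᵢ^{bᵢ-cᵢ+1} : bᵢ < aᵢ)`. -/
abbrev IntervalMod (k : Type) [Field k] {n : ℕ} (a c b : Fin n → ℕ) : Type :=
  PS k n ⧸ intervalIdeal k a c b

/-- The graded piece of `kₐ[c,b]` in degree `d`: spanned by (the image of) the
monomial `x^{d-c}` when `d ⪰ c`, and `0` otherwise. -/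
noncomputable def intervalPiece (k : Type) [Field k] {n : ℕ} (a c b : Fin n → ℕ)
    (d : Fin n → ℤ) : Submodule k (IntervalMod k a c b) :=
  Submodule.span k {y | ∃ e : Fin n →₀ ℕ, (∀ i, d i = c i + e i) ∧
    y = Ideal.Quotient.mk (intervalIdeal k a c b) (monomial e (1 : k))}

/-- `d - eᵢ` in `ℕⁿ`. -/
def subE {n : ℕ} (d : Fin n → ℕ) (i : Fin n) : Fin n → ℕ :=
  fun j => if j = i then d j - 1 else d j

/-- `N` is (isomorphic to) the Alexander dual `𝒜ₐ(M)` of `M`:  there is a family of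
perfect `k`-bilinear pairings `N_d × M_{a-d} → k` (for `d ∈ [0,a]`) intertwining
multiplication by `xᵢ` on the two sides. -/
structure IsAlexDual {k : Type} [Field k] {n : ℕ} {M N : Type}
    [AddCommGroup M] [Module (PS k n) M] [Module k M] [IsScalarTower k (PS k n) M]
    [AddCommGroup N] [Module (PS k n) N] [Module k N] [IsScalarTower k (PS k n) N]
    (a : Fin n → ℕ) (grM : MGrading k n M) (grN : MGrading k n N) : Prop where
  exists_pairing : ∃ B : (Fin n → ℕ) → N → M → k,
    (∀ d y y' m, B d (y + y') m = B d y m + B d y' m) ∧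
    (∀ d (r : k) y m, B d (r • y) m = r * B d y m) ∧
    (∀ d y m m', B d y (m + m') = B d y m + B d y m') ∧
    (∀ d (r : k) y m, B d y (r • m) = r * B d y m) ∧
    (∀ d : Fin n → ℕ, (∀ j, d j ≤ a j) →
      (∀ y ∈ grN.piece (natDeg d),
        (∀ m ∈ grM.piece (natDeg (fun j => a j - d j)), B d y m = 0) → y = 0) ∧
      (∀ m ∈ grM.piece (natDeg (fun j => a j - d j)),
        (∀ y ∈ grN.piece (natDeg d), B d y m = 0) → m = 0)) ∧
    (∀ (d : Fin n → ℕ) (i : Fin n), (∀ j, d j ≤ a j) → 1 ≤ d i →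
      ∀ y ∈ grN.piece (natDeg (subE d i)),
        ∀ m ∈ grM.piece (natDeg (fun j => a j - d j)),
          B d ((X i : PS k n) • y) m = B (subE d i) y ((X i : PS k n) • m))

section Skel

variable {k : Type} [Field k] {n : ℕ} {M : Type} [AddCommGroup M]
  [Module (PS k n) M] [Module k M] [IsScalarTower k (PS k n) M]

/-- `M^{≥l}` (i.e. `M^{>l-1}`): the `S`-submodule of `M` generated by all graded
components `M_d` with `#suppᵃ(d) ≥ l`. -/
noncomputable def skelSubGe (a : Fin n → ℕ) (gr : MGrading k n M) (l : ℕ) : Submodule (PS k n) M :=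
  Submodule.span (PS k n)
    {m : M | ∃ d : Fin n → ℕ, l ≤ suppCardA a d ∧ m ∈ gr.piece (natDeg d)}

/-- `M^{>l}`: the `S`-submodule of `M` generated by all graded components `M_d` with
`#suppᵃ(d) > l`. -/
noncomputable def skelSubGt (a : Fin n → ℕ) (gr : MGrading k n M) (l : ℕ) : Submodule (PS k n) M :=
  skelSubGe a gr (l + 1)

end Skel

/-- The monomial `x^d`. -/
noncomputable def mono (k : Type) [Field k] {n : ℕ} (d : Fin n → ℕ) : PS k n :=
  monomial (toFs d) (1 : k)

/-- The sliding operation `a ◁ b`. -/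
def slide {n : ℕ} (a b : Fin n → ℕ) : Fin n → ℕ :=
  fun i => if a i = 0 then 0 else a i + b i

/-- The irreducible monomial ideal `𝔪^a = (xᵢ^{aᵢ} : aᵢ > 0)`. -/
noncomputable def irrIdeal (k : Type) [Field k] {n : ℕ} (a : Fin n → ℕ) : Ideal (PS k n) :=
  Ideal.span {p | ∃ i, 0 < a i ∧ p = (X i : PS k n) ^ (a i)}

/-- The degree-`d` piece of the natural monomial grading of `S/I` for a monomial
ideal `I`: spanned by the image of the monomial of degree `d`. -/
noncomputable def quotMonPiece (k : Type) [Field k] {n : ℕ} (I : Ideal (PS k n))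
    (d : Fin n → ℤ) : Submodule k (PS k n ⧸ I) :=
  Submodule.span k {y | ∃ e : Fin n →₀ ℕ, (∀ i, d i = e i) ∧
    y = Ideal.Quotient.mk I (monomial e (1 : k))}

/-- The degree-`d` piece of the natural monomial grading of a monomial ideal `I`
(regarded as an `S`-module): spanned by the monomial of degree `d` if it lies in `I`. -/
noncomputable def idealMonPiece (k : Type) [Field k] {n : ℕ} (I : Ideal (PS k n))
    (d : Fin n → ℤ) : Submodule k ↥I :=
  Submodule.span k {y : ↥I | ∃ e : Fin n →₀ ℕ, (∀ i, d i = e i) ∧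
    (y : PS k n) = monomial e (1 : k)}

section Aux

variable {k : Type} [Field k] {n : ℕ} {M : Type} [AddCommGroup M]
  [Module (PS k n) M] [Module k M] [IsScalarTower k (PS k n) M]

lemma indep_sum_eq_zero {ι : Type*} {p : ι → Submodule k M} (h : iSupIndep p)
    (c : ι →₀ M) (hc : ∀ i, c i ∈ p i) (hs : (c.sum fun _ x => x) = 0) :
    ∀ i, c i = 0 := by
  classical
  intro i0
  by_cases hi : i0 ∈ c.support
  · have h2 := Finset.add_sum_erase c.support (fun i => c i) hi
    rw [Finsupp.sum] at hs
    rw [hs] at h2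
    have h1 : c i0 = - ∑ i ∈ c.support.erase i0, c i := eq_neg_of_add_eq_zero_left h2
    have key : c i0 ∈ (⨆ (j) (_ : j ≠ i0), p j) := by
      rw [h1]
      exact neg_mem (Submodule.sum_mem _ fun i hi' => Submodule.mem_iSup_of_mem i
        (Submodule.mem_iSup_of_mem (Finset.ne_of_mem_erase hi') (hc i)))
    exact Submodule.disjoint_def.mp (iSupIndep_def.mp h i0) _ (hc i0) key
  · simpa using Finsupp.notMem_support_iff.mp hi

lemma indep_component_eq {ι : Type*} {p : ι → Submodule k M} (h : iSupIndep p)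
    (c : ι →₀ M) (hc : ∀ i, c i ∈ p i) {d : ι} {y : M} (hy : y ∈ p d)
    (hs : (c.sum fun _ x => x) = y) : c d = y := by
  classical
  have h0 : ((c - Finsupp.single d y).sum fun _ x => x) = 0 := by
    rw [Finsupp.sum_sub_index (fun _ _ _ => rfl), hs,
      Finsupp.sum_single_index rfl, sub_self]
  have hc' : ∀ i, (c - Finsupp.single d y) i ∈ p i := by
    intro i
    rcases eq_or_ne i d with rfl | hne
    · simpa using Submodule.sub_mem _ (hc i) hy
    · rw [Finsupp.sub_apply, Finsupp.single_apply, if_neg (Ne.symm hne), sub_zero]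
      exact hc i
  have := indep_sum_eq_zero h _ hc' h0 d
  simpa [sub_eq_zero] using this

lemma stanleySub_eq_range (m : M) (Z : Finset (Fin n)) :
    stanleySub m Z = LinearMap.range (Finsupp.linearCombination k
      (fun b : {b : Fin n →₀ ℕ // ∀ j ∈ b.support, j ∈ Z} =>
        ((monomial (b : Fin n →₀ ℕ) (1 : k) : PS k n) • m : M))) := by
  rw [Finsupp.range_linearCombination, stanleySub]
  congr 1
  ext y
  constructor
  · rintro ⟨b, hb, rfl⟩; exact ⟨⟨b, hb⟩, rfl⟩
  · rintro ⟨⟨b, hb⟩, rfl⟩; exact ⟨b, hb, rfl⟩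

variable {M' : Type} [AddCommGroup M'] [Module (PS k n) M'] [Module k M']
  [IsScalarTower k (PS k n) M']

lemma map_stanleySub (φ : M →ₗ[PS k n] M') (m : M) (Z : Finset (Fin n)) :
    Submodule.map (φ.restrictScalars k) (stanleySub m Z) = stanleySub (φ m) Z := by
  rw [stanleySub, stanleySub, Submodule.map_span]
  congr 1
  ext y
  constructor
  · rintro ⟨-, ⟨b, hb, rfl⟩, rfl⟩
    exact ⟨b, hb, by rw [LinearMap.restrictScalars_apply, map_smul]⟩
  · rintro ⟨b, hb, rfl⟩
    exact ⟨_, ⟨b, hb, rfl⟩, by rw [LinearMap.restrictScalars_apply, map_smul]⟩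

lemma stanleySub_inj (φ : M →ₗ[PS k n] M') (m : M) (Z : Finset (Fin n))
    (h : LinearIndependent k (fun b : {b : Fin n →₀ ℕ // ∀ j ∈ b.support, j ∈ Z} =>
      ((monomial (b : Fin n →₀ ℕ) (1 : k) : PS k n) • φ m : M')))
    {x : M} (hx : x ∈ (stanleySub m Z : Submodule k M)) (hx0 : φ x = 0) : x = 0 := by
  rw [stanleySub_eq_range] at hx
  obtain ⟨c, rfl⟩ := hx
  have hcomp : (⇑(φ.restrictScalars k) ∘ fun b : {b : Fin n →₀ ℕ // ∀ j ∈ b.support, j ∈ Z} =>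
      ((monomial (b : Fin n →₀ ℕ) (1 : k) : PS k n) • m : M)) =
      fun b : {b : Fin n →₀ ℕ // ∀ j ∈ b.support, j ∈ Z} =>
        ((monomial (b : Fin n →₀ ℕ) (1 : k) : PS k n) • φ m : M') := by
    funext b; simp [map_smul]
  have h0 : Finsupp.linearCombination k
      (fun b : {b : Fin n →₀ ℕ // ∀ j ∈ b.support, j ∈ Z} =>
        ((monomial (b : Fin n →₀ ℕ) (1 : k) : PS k n) • φ m : M')) c = 0 := by
    rw [← hcomp, ← Finsupp.apply_linearCombination]
    simpa using hx0
  rw [linearIndependent_iff.mp h c h0]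
  simp

end Aux

theorem stmt0 (k : Type) [Field k] (n : ℕ) (L M N : Type)
    [AddCommGroup L] [Module (PS k n) L] [Module k L] [IsScalarTower k (PS k n) L] [Module.Finite (PS k n) L]
    [AddCommGroup M] [Module (PS k n) M] [Module k M] [IsScalarTower k (PS k n) M] [Module.Finite (PS k n) M]
    [AddCommGroup N] [Module (PS k n) N] [Module k N] [IsScalarTower k (PS k n) N] [Module.Finite (PS k n) N]
    (grL : MGrading k n L) (grM : MGrading k n M) (grN : MGrading k n N)
    (f : L →ₗ[PS k n] M) (g : M →ₗ[PS k n] N)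
    (hf : Function.Injective f) (hg : Function.Surjective g)
    (hfg : LinearMap.range f = LinearMap.ker g)
    (hfgr : ∀ d, ∀ x ∈ grL.piece d, f x ∈ grM.piece d)
    (hggr : ∀ d, ∀ x ∈ grM.piece d, g x ∈ grN.piece d) :
    min (sdepth grL) (sdepth grN) ≤ sdepth grM := by
  classical
  rcases Nat.eq_zero_or_pos (min (sdepth grL) (sdepth grN)) with h0 | hpos
  · rw [h0]; exact Nat.zero_le _
  have getwit : ∀ A : Set ℕ, min (sdepth grL) (sdepth grN) ≤ sSup A →
      ∃ x ∈ A, min (sdepth grL) (sdepth grN) ≤ x := by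
    intro A h2
    by_cases hb : BddAbove A
    · rcases A.eq_empty_or_nonempty with rfl | hne
      · rw [csSup_empty, Nat.bot_eq_zero] at h2; omega
      · exact ⟨sSup A, Nat.sSup_mem hne hb, h2⟩
    · obtain ⟨x, hx, hx2⟩ := not_bddAbove_iff.mp hb (min (sdepth grL) (sdepth grN))
      exact ⟨x, hx, hx2.le⟩
  obtain ⟨xL, ⟨DL, hDL⟩, hxL⟩ := getwit _ (min_le_left _ _)
  obtain ⟨xN, ⟨DN, hDN⟩, hxN⟩ := getwit _ (min_le_right _ _)
  -- surjectivity of g on graded pieces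
  have piece_surj : ∀ d, ∀ y ∈ grN.piece d, ∃ m ∈ grM.piece d, g m = y := by
    intro d y hy
    obtain ⟨m, rfl⟩ := hg y
    have hm : m ∈ ⨆ e, grM.piece e := by rw [grM.total]; exact Submodule.mem_top
    rw [Submodule.mem_iSup_iff_exists_finsupp] at hm
    obtain ⟨c, hc, hsum⟩ := hm
    refine ⟨c d, hc d, ?_⟩
    have key := indep_component_eq grN.indep (c.mapRange g (map_zero g))
      (fun e => by rw [Finsupp.mapRange_apply]; exact hggr e _ (hc e)) hy
      (by rw [Finsupp.sum_mapRange_index (fun _ => rfl), ← map_finsuppSum, hsum])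
    rwa [Finsupp.mapRange_apply] at key
  choose mlift hmem hgm using fun j => piece_surj (DN.deg j) (DN.elem j) (DN.homog j)
  -- basic facts
  have hAi : ∀ i, Submodule.map (f.restrictScalars k) (stanleySub (DL.elem i) (DL.Z i))
      = (stanleySub (f (DL.elem i)) (DL.Z i) : Submodule k M) := fun i => map_stanleySub f _ _
  have hBj : ∀ j, Submodule.map (g.restrictScalars k) (stanleySub (mlift j) (DN.Z j))
      = (stanleySub (DN.elem j) (DN.Z j) : Submodule k N) := fun j => by
    rw [map_stanleySub, hgm j]
  have freeN' : ∀ j, LinearIndependent k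
      (fun b : {b : Fin n →₀ ℕ // ∀ j' ∈ b.support, j' ∈ DN.Z j} =>
        ((monomial (b : Fin n →₀ ℕ) (1 : k) : PS k n) • g (mlift j) : N)) := fun j => by
    rw [hgm j]; exact DN.free j
  have Binj : ∀ j, ∀ x ∈ (stanleySub (mlift j) (DN.Z j) : Submodule k M), g x = 0 → x = 0 :=
    fun j x hx hx0 => stanleySub_inj g (mlift j) (DN.Z j) (freeN' j) hx hx0
  have hkerf : ∀ l : L, g (f l) = 0 := fun l => by
    have h1 : f l ∈ LinearMap.ker g := hfg ▸ LinearMap.mem_range_self f l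
    simpa using h1
  have hAker : ∀ i, ∀ x ∈ (stanleySub (f (DL.elem i)) (DL.Z i) : Submodule k M), g x = 0 := by
    intro i x hx
    rw [← hAi i] at hx
    obtain ⟨l, -, rfl⟩ := hx
    exact hkerf l
  have supAker : ∀ x ∈ (⨆ i, (stanleySub (f (DL.elem i)) (DL.Z i) : Submodule k M)),
      g x = 0 := by
    intro x hx
    rw [Submodule.mem_iSup_iff_exists_finsupp] at hx
    obtain ⟨c, hc, rfl⟩ := hx
    rw [map_finsuppSum, Finsupp.sum]
    exact Finset.sum_eq_zero fun i _ => hAker i _ (hc i)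
  have supBinj : ∀ x ∈ (⨆ j, (stanleySub (mlift j) (DN.Z j) : Submodule k M)),
      g x = 0 → x = 0 := by
    intro x hx hx0
    rw [Submodule.mem_iSup_iff_exists_finsupp] at hx
    obtain ⟨c, hc, rfl⟩ := hx
    have hz := indep_sum_eq_zero DN.indep (c.mapRange g (map_zero g))
      (fun j => by rw [Finsupp.mapRange_apply, ← hBj j]; exact ⟨c j, hc j, rfl⟩)
      (by rw [Finsupp.sum_mapRange_index (fun _ => rfl), ← map_finsuppSum, hx0])
    have hz' : ∀ j, c j = 0 := fun j => Binj j _ (hc j) (by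
      have := hz j; rwa [Finsupp.mapRange_apply] at this)
    rw [Finsupp.sum]
    exact Finset.sum_eq_zero fun j _ => hz' j
  -- nontriviality of M
  have hL_nontriv : ∃ l : L, l ≠ 0 := by
    by_contra hcon
    push_neg at hcon
    have hmemall : ∀ d : ℕ, d ∈ {d | ∃ D : StanleyDecomp grL, ∀ i, d ≤ (D.Z i).card} := by
      intro d
      refine ⟨⟨0, Fin.elim0, Fin.elim0, Fin.elim0, fun i => i.elim0, fun i => i.elim0,
        iSupIndep_def.mpr fun i => i.elim0, ?_⟩, fun i => i.elim0⟩
      rw [iSup_of_empty]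
      ext l
      simpa using hcon l
    have hnb : ¬ BddAbove {d | ∃ D : StanleyDecomp grL, ∀ i, d ≤ (D.Z i).card} := by
      rintro ⟨b, hb⟩
      have := hb (hmemall (b + 1))
      omega
    have hz : sdepth grL = 0 := by
      rw [sdepth, csSup_of_not_bddAbove hnb, csSup_empty]
      rfl
    have h1 : 0 < sdepth grL := lt_of_lt_of_le hpos (min_le_left _ _)
    omega
  have hM_ne : ∃ x : M, x ≠ 0 := by
    obtain ⟨l, hl⟩ := hL_nontriv
    exact ⟨f l, fun hc => hl (hf (by simpa using hc))⟩
  -- conclude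
  unfold sdepth
  refine le_csSup ⟨n, ?_⟩ ?_
  · rintro d ⟨D, hD⟩
    rcases Nat.eq_zero_or_pos D.s with hs | hs
    · exfalso
      obtain ⟨x, hx⟩ := hM_ne
      have hbot : x ∈ (⨆ i, (stanleySub (D.elem i) (D.Z i) : Submodule k M)) := by
        rw [D.total]; exact Submodule.mem_top
      haveI : IsEmpty (Fin D.s) := by rw [hs]; infer_instance
      rw [iSup_of_empty] at hbot
      exact hx (by simpa using hbot)
    · exact le_trans (hD ⟨0, hs⟩) (le_trans (Finset.card_le_univ _) (by simp))
  refine ⟨⟨DL.s + DN.s,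
      Fin.addCases (fun i => f (DL.elem i)) (fun j => mlift j),
      Fin.addCases DL.deg DN.deg,
      Fin.addCases DL.Z DN.Z, ?_, ?_, ?_, ?_⟩, ?_⟩
  · -- homog
    intro t
    induction t using Fin.addCases with
    | left i => simp only [Fin.addCases_left]; exact hfgr _ _ (DL.homog i)
    | right j => simp only [Fin.addCases_right]; exact hmem j
  · -- free
    intro t
    induction t using Fin.addCases with
    | left i =>
      beta_reduce
      rw [show Fin.addCases DL.Z DN.Z (Fin.castAdd DN.s i) = DL.Z i from Fin.addCases_left i,
        show Fin.addCases (fun i => f (DL.elem i)) (fun j => mlift j) (Fin.castAdd DN.s i)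
          = f (DL.elem i) from Fin.addCases_left i]
      have h1 := (DL.free i).map' (f.restrictScalars k)
        (LinearMap.ker_eq_bot.mpr fun a b hab => hf hab)
      have h2 : (⇑(f.restrictScalars k) ∘ fun b : {b : Fin n →₀ ℕ // ∀ j ∈ b.support, j ∈ DL.Z i} =>
          ((monomial (b : Fin n →₀ ℕ) (1 : k) : PS k n) • DL.elem i : L)) =
          fun b : {b : Fin n →₀ ℕ // ∀ j ∈ b.support, j ∈ DL.Z i} =>
            ((monomial (b : Fin n →₀ ℕ) (1 : k) : PS k n) • f (DL.elem i) : M) := by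
        funext b
        simp only [Function.comp_apply, LinearMap.restrictScalars_apply, map_smul]
      rw [h2] at h1
      exact h1
    | right j =>
      beta_reduce
      rw [show Fin.addCases DL.Z DN.Z (Fin.natAdd DL.s j) = DN.Z j from Fin.addCases_right j,
        show Fin.addCases (fun i => f (DL.elem i)) (fun j => mlift j) (Fin.natAdd DL.s j)
          = mlift j from Fin.addCases_right j]
      refine LinearIndependent.of_comp (g.restrictScalars k) ?_
      have h2 : (⇑(g.restrictScalars k) ∘ fun b : {b : Fin n →₀ ℕ // ∀ j' ∈ b.support, j' ∈ DN.Z j} =>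
          ((monomial (b : Fin n →₀ ℕ) (1 : k) : PS k n) • mlift j : M)) =
          fun b : {b : Fin n →₀ ℕ // ∀ j' ∈ b.support, j' ∈ DN.Z j} =>
            ((monomial (b : Fin n →₀ ℕ) (1 : k) : PS k n) • DN.elem j : N) := by
        funext b
        simp only [Function.comp_apply, LinearMap.restrictScalars_apply, map_smul, hgm j]
      rw [h2]
      exact DN.free j
  · -- indep
    rw [iSupIndep_def]
    intro t
    rw [Submodule.disjoint_def]
    intro x hx hx'
    induction t using Fin.addCases with
    | left i0 =>
      simp only [Fin.addCases_left] at hx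
      have hle : (⨆ (t') (_ : t' ≠ Fin.castAdd DN.s i0),
          (stanleySub (Fin.addCases (fun i => f (DL.elem i)) (fun j => mlift j) t')
            (Fin.addCases DL.Z DN.Z t') : Submodule k M)) ≤
          (⨆ (i) (_ : i ≠ i0), (stanleySub (f (DL.elem i)) (DL.Z i) : Submodule k M)) ⊔
          (⨆ j, (stanleySub (mlift j) (DN.Z j) : Submodule k M)) := by
        refine iSup₂_le fun t' ht' => ?_
        induction t' using Fin.addCases with
        | left i =>
          have hne : i ≠ i0 := fun hE => ht' (by rw [hE])
          simp only [Fin.addCases_left]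
          refine le_trans ?_ le_sup_left
          exact le_iSup₂ (f := fun i' (_ : i' ≠ i0) =>
            (stanleySub (f (DL.elem i')) (DL.Z i') : Submodule k M)) i hne
        | right j =>
          simp only [Fin.addCases_right]
          refine le_trans ?_ le_sup_right
          exact le_iSup (fun j' => (stanleySub (mlift j') (DN.Z j') : Submodule k M)) j
      obtain ⟨u, hu, v, hv, rfl⟩ := Submodule.mem_sup.mp (hle hx')
      have hx0 : g (u + v) = 0 := hAker i0 _ hx
      have hu0 : g u = 0 :=
        supAker u ((iSup₂_le fun i _ => le_iSup
          (fun i => (stanleySub (f (DL.elem i)) (DL.Z i) : Submodule k M)) i) hu)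
      have hv0 : g v = 0 := by
        rw [map_add, hu0, zero_add] at hx0; exact hx0
      have hveq : v = 0 := supBinj v hv hv0
      rw [hveq, add_zero] at hx ⊢
      rw [← hAi i0] at hx
      obtain ⟨l1, hl1, hxl1⟩ := hx
      have hmap : (⨆ (i) (_ : i ≠ i0), (stanleySub (f (DL.elem i)) (DL.Z i) : Submodule k M)) =
          Submodule.map (f.restrictScalars k)
            (⨆ (i) (_ : i ≠ i0), stanleySub (DL.elem i) (DL.Z i)) := by
        simp only [Submodule.map_iSup]
        exact iSup_congr fun i => iSup_congr fun _ => (hAi i).symm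
      rw [hmap] at hu
      obtain ⟨l2, hl2, hxl2⟩ := hu
      have hl12 : l1 = l2 := hf (hxl1.trans hxl2.symm)
      have hl10 : l1 = 0 := by
        refine Submodule.disjoint_def.mp (iSupIndep_def.mp DL.indep i0) l1 hl1 ?_
        rw [hl12]; exact hl2
      rw [← hxl1, hl10, map_zero]
    | right j0 =>
      simp only [Fin.addCases_right] at hx
      have hle : (⨆ (t') (_ : t' ≠ Fin.natAdd DL.s j0),
          (stanleySub (Fin.addCases (fun i => f (DL.elem i)) (fun j => mlift j) t')
            (Fin.addCases DL.Z DN.Z t') : Submodule k M)) ≤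
          (⨆ i, (stanleySub (f (DL.elem i)) (DL.Z i) : Submodule k M)) ⊔
          (⨆ (j) (_ : j ≠ j0), (stanleySub (mlift j) (DN.Z j) : Submodule k M)) := by
        refine iSup₂_le fun t' ht' => ?_
        induction t' using Fin.addCases with
        | left i =>
          simp only [Fin.addCases_left]
          refine le_trans ?_ le_sup_left
          exact le_iSup (fun i' => (stanleySub (f (DL.elem i')) (DL.Z i') : Submodule k M)) i
        | right j =>
          have hne : j ≠ j0 := fun hE => ht' (by rw [hE])
          simp only [Fin.addCases_right]
          refine le_trans ?_ le_sup_right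
          exact le_iSup₂ (f := fun j' (_ : j' ≠ j0) =>
            (stanleySub (mlift j') (DN.Z j') : Submodule k M)) j hne
      obtain ⟨u, hu, v, hv, rfl⟩ := Submodule.mem_sup.mp (hle hx')
      have hu0 : g u = 0 := supAker u hu
      have hgx : g (u + v) ∈ (stanleySub (DN.elem j0) (DN.Z j0) : Submodule k N) := by
        rw [← hBj j0]; exact ⟨u + v, hx, rfl⟩
      have hgv : g (u + v) ∈
          (⨆ (j) (_ : j ≠ j0), (stanleySub (DN.elem j) (DN.Z j) : Submodule k N)) := by
        have hmap : (⨆ (j) (_ : j ≠ j0), (stanleySub (DN.elem j) (DN.Z j) : Submodule k N)) =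
            Submodule.map (g.restrictScalars k)
              (⨆ (j) (_ : j ≠ j0), stanleySub (mlift j) (DN.Z j)) := by
          simp only [Submodule.map_iSup]
          exact iSup_congr fun j => iSup_congr fun _ => (hBj j).symm
        rw [hmap]
        exact ⟨v, hv, by rw [LinearMap.restrictScalars_apply, map_add, hu0, zero_add]⟩
      have hgx0 : g (u + v) = 0 :=
        Submodule.disjoint_def.mp (iSupIndep_def.mp DN.indep j0) _ hgx hgv
      exact Binj j0 _ hx hgx0
  · -- total
    rw [eq_top_iff]
    rintro m -
    have h1 : g m ∈ (⨆ j, (stanleySub (DN.elem j) (DN.Z j) : Submodule k N)) := by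
      rw [DN.total]; exact Submodule.mem_top
    have h2 : (⨆ j, (stanleySub (DN.elem j) (DN.Z j) : Submodule k N)) =
        Submodule.map (g.restrictScalars k) (⨆ j, stanleySub (mlift j) (DN.Z j)) := by
      rw [Submodule.map_iSup]; exact iSup_congr fun j => (hBj j).symm
    rw [h2] at h1
    obtain ⟨v, hv, hgv⟩ := h1
    have hker : m - v ∈ LinearMap.ker g := by
      rw [LinearMap.mem_ker, map_sub]
      rw [LinearMap.restrictScalars_apply] at hgv
      rw [hgv, sub_self]
    rw [← hfg] at hker
    obtain ⟨l, hl⟩ := hker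
    have hlmem : l ∈ (⨆ i, (stanleySub (DL.elem i) (DL.Z i) : Submodule k L)) := by
      rw [DL.total]; exact Submodule.mem_top
    have hmv : m - v ∈ (⨆ i, (stanleySub (f (DL.elem i)) (DL.Z i) : Submodule k M)) := by
      have h3 : (⨆ i, (stanleySub (f (DL.elem i)) (DL.Z i) : Submodule k M)) =
          Submodule.map (f.restrictScalars k) (⨆ i, stanleySub (DL.elem i) (DL.Z i)) := by
        rw [Submodule.map_iSup]; exact iSup_congr fun i => (hAi i).symm
      rw [h3]
      exact ⟨l, hlmem, hl⟩
    have hALe : (⨆ i, (stanleySub (f (DL.elem i)) (DL.Z i) : Submodule k M)) ≤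
        ⨆ t, (stanleySub (Fin.addCases (fun i => f (DL.elem i)) (fun j => mlift j) t)
          (Fin.addCases DL.Z DN.Z t) : Submodule k M) := by
      refine iSup_le fun i => ?_
      have h4 := le_iSup (fun t =>
        (stanleySub (Fin.addCases (fun i => f (DL.elem i)) (fun j => mlift j) t)
          (Fin.addCases DL.Z DN.Z t) : Submodule k M)) (Fin.castAdd DN.s i)
      simpa only [Fin.addCases_left] using h4
    have hBLe : (⨆ j, (stanleySub (mlift j) (DN.Z j) : Submodule k M)) ≤
        ⨆ t, (stanleySub (Fin.addCases (fun i => f (DL.elem i)) (fun j => mlift j) t)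
          (Fin.addCases DL.Z DN.Z t) : Submodule k M) := by
      refine iSup_le fun j => ?_
      have h4 := le_iSup (fun t =>
        (stanleySub (Fin.addCases (fun i => f (DL.elem i)) (fun j => mlift j) t)
          (Fin.addCases DL.Z DN.Z t) : Submodule k M)) (Fin.natAdd DL.s j)
      simpa only [Fin.addCases_right] using h4
    have hsplit : m = (m - v) + v := (sub_add_cancel m v).symm
    rw [hsplit]
    exact Submodule.add_mem _ (hALe hmv) (hBLe hv)
  · -- card bound
    intro t
    induction t using Fin.addCases with
    | left i =>
      simp only [Fin.addCases_left]
      exact le_trans hxL (hDL i)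
    | right j =>
      simp only [Fin.addCases_right]
      exact le_trans hxN (hDN j)
end

section
/- For a, b, c ∈ ℕⁿ with c ⪯ b ⪯ a, the Stanley depth of the interval module kₐ[c,b] equals #{i : bᵢ ≥ aᵢ}. -/
open MvPolynomial

section Aux

variable {k : Type} [Field k] {n : ℕ} (a c b : Fin n → ℕ)

@[simp] lemma toFs_apply (d : Fin n → ℕ) (j : Fin n) : toFs d j = d j := rfl

local notation "II" => intervalIdeal k a c b

/-- A monomial whose exponent exceeds the bound in a "bounded" direction dies in the quotient. -/
lemma mk_monomial_eq_zero {j : Fin n} (hj : b j < a j) {g : Fin n →₀ ℕ}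
    (hg : b j - c j + 1 ≤ g j) :
    Ideal.Quotient.mk II (monomial g (1 : k)) = 0 := by
  rw [Ideal.Quotient.eq_zero_iff_mem]
  set t := b j - c j + 1 with ht
  have hle : Finsupp.single j t ≤ g := Finsupp.single_le_iff.2 hg
  have hsplit : monomial g (1 : k) =
      monomial (g - Finsupp.single j t) (1 : k) * (X j ^ t) := by
    rw [X_pow_eq_monomial, monomial_mul, tsub_add_cancel_of_le hle, one_mul]
  rw [hsplit]
  exact Ideal.mul_mem_left _ _ (Ideal.subset_span ⟨j, hj, rfl⟩)

/-- Elements of the interval ideal have vanishing coefficients on reduced monomials. -/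
lemma coeff_eq_zero_of_mem_intervalIdeal {p : PS k n} (hp : p ∈ II) :
    ∀ g : Fin n →₀ ℕ, (∀ j, b j < a j → g j ≤ b j - c j) → coeff g p = 0 := by
  refine Submodule.span_induction ?_ ?_ ?_ ?_ hp
  · rintro x ⟨i, hi, rfl⟩ g hg
    rw [X_pow_eq_monomial, coeff_monomial, if_neg]
    intro h
    have := hg i hi
    rw [← h, Finsupp.single_eq_same] at this
    omega
  · intro g _; simp
  · intro x y _ _ hx hy g hg
    simp [coeff_add, hx g hg, hy g hg]
  · intro r x _ hx g hg
    rw [smul_eq_mul, coeff_mul]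
    refine Finset.sum_eq_zero fun uv huv => ?_
    rw [Finset.HasAntidiagonal.mem_antidiagonal] at huv
    have hv : ∀ j, b j < a j → uv.2 j ≤ b j - c j := by
      intro j hj
      have : uv.1 j + uv.2 j = g j := by rw [← Finsupp.add_apply, huv]
      have := hg j hj; omega
    rw [hx uv.2 hv, mul_zero]

/-- The set of reduced exponents. -/
def RedSet : Set (Fin n →₀ ℕ) := {g | ∀ j, b j < a j → g j ≤ b j - c j}

lemma coeff_eq_zero_of_mem_span_red {p : PS k n}
    (hp : p ∈ Submodule.span k ((fun g : RedSet a c b => monomial (g : Fin n →₀ ℕ) (1 : k)) ''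
      Set.univ)) :
    ∀ g : Fin n →₀ ℕ, g ∉ RedSet a c b → coeff g p = 0 := by
  refine Submodule.span_induction ?_ ?_ ?_ ?_ hp
  · rintro x ⟨⟨g', hg'⟩, -, rfl⟩ g hg
    rw [coeff_monomial, if_neg]
    rintro rfl; exact hg hg'
  · intro g _; simp
  · intro x y _ _ hx hy g hg; simp [coeff_add, hx g hg, hy g hg]
  · intro r x _ hx g hg
    rw [MvPolynomial.coeff_smul, hx g hg, smul_zero]

end Aux
section Aux2

variable (k : Type) [Field k] {n : ℕ} (a c b : Fin n → ℕ)

/-- The k-linear quotient map. -/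
noncomputable def qmap : PS k n →ₗ[k] IntervalMod k a c b :=
  (Ideal.Quotient.mkₐ k (intervalIdeal k a c b)).toLinearMap

@[simp] lemma qmap_apply (p : PS k n) :
    qmap k a c b p = Ideal.Quotient.mk (intervalIdeal k a c b) p := rfl

lemma mk_monomial_smul (g : Fin n →₀ ℕ) (r : k) :
    Ideal.Quotient.mk (intervalIdeal k a c b) (monomial g r)
      = r • Ideal.Quotient.mk (intervalIdeal k a c b) (monomial g (1 : k)) := by
  have : monomial g r = r • monomial g (1:k) := by
    rw [MvPolynomial.smul_monomial, smul_eq_mul, mul_one]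
  rw [this]; rfl

/-- The classes of reduced monomials. -/
noncomputable def BB : RedSet a c b → IntervalMod k a c b :=
  fun g => Ideal.Quotient.mk (intervalIdeal k a c b) (monomial (g : Fin n →₀ ℕ) (1 : k))

lemma BB_linearIndependent : LinearIndependent k (BB k a c b) := by
  have hli : LinearIndependent k (fun g : RedSet a c b => monomial (g : Fin n →₀ ℕ) (1 : k)) := by
    have := (basisMonomials (Fin n) k).linearIndependent
    rw [coe_basisMonomials] at this
    exact this.comp _ Subtype.coe_injective
  have hdisj : Disjoint (Submodule.span k
      (Set.range fun g : RedSet a c b => monomial (g : Fin n →₀ ℕ) (1 : k)))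
      (LinearMap.ker (qmap k a c b)) := by
    rw [Submodule.disjoint_def]
    intro x hx hker
    have hker' : x ∈ intervalIdeal k a c b := by
      rw [LinearMap.mem_ker, qmap_apply, Ideal.Quotient.eq_zero_iff_mem] at hker
      exact hker
    have hx' : x ∈ Submodule.span k
        ((fun g : RedSet a c b => monomial (g : Fin n →₀ ℕ) (1 : k)) '' Set.univ) := by
      rwa [Set.image_univ]
    ext g
    by_cases hg : g ∈ RedSet a c b
    · simp [coeff_eq_zero_of_mem_intervalIdeal a c b hker' g hg]
    · simp [coeff_eq_zero_of_mem_span_red a c b hx' g hg]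
  exact hli.map (f := qmap k a c b) hdisj

lemma mk_monomial_mem_span_BB (g : Fin n →₀ ℕ) (r : k) :
    Ideal.Quotient.mk (intervalIdeal k a c b) (monomial g r) ∈
      Submodule.span k (Set.range (BB k a c b)) := by
  rw [mk_monomial_smul]
  by_cases hg : g ∈ RedSet a c b
  · exact Submodule.smul_mem _ _ (Submodule.subset_span ⟨⟨g, hg⟩, rfl⟩)
  · have : ∃ j, b j < a j ∧ b j - c j + 1 ≤ g j := by
      by_contra h
      push_neg at h
      exact hg fun j hj => by have := h j hj; omega
    obtain ⟨j, hj, hgj⟩ := this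
    rw [mk_monomial_eq_zero a c b hj hgj, smul_zero]
    exact Submodule.zero_mem _

lemma span_BB_eq_top : Submodule.span k (Set.range (BB k a c b)) = ⊤ := by
  rw [eq_top_iff]
  rintro x -
  obtain ⟨p, rfl⟩ := Ideal.Quotient.mk_surjective (I := intervalIdeal k a c b) x
  have : Ideal.Quotient.mk (intervalIdeal k a c b) p = qmap k a c b p := rfl
  rw [this, ← support_sum_monomial_coeff p, map_sum]
  exact Submodule.sum_mem _ fun g _ => mk_monomial_mem_span_BB k a c b g (coeff g p)

end Aux2
section Aux3

variable {k : Type} [Field k]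

/-- spans of disjoint pieces of a linearly independent family are independent. -/
lemma indep_span_of_li {ι η M : Type*} [AddCommGroup M] [Module k M]
    {v : ι → M} (hv : LinearIndependent k v) {t : η → Set ι}
    (ht : Pairwise (Function.onFun Disjoint t)) :
    iSupIndep (fun j => Submodule.span k (v '' t j)) := by
  intro j
  have h1 : (⨆ i, ⨆ (_ : i ≠ j), Submodule.span k (v '' t i))
      = Submodule.span k (v '' ⋃ i ∈ {i | i ≠ j}, t i) := by
    rw [Set.image_iUnion₂]
    simp [Submodule.span_iUnion]
  rw [h1]
  refine hv.disjoint_span_image ?_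
  rw [Set.disjoint_left]
  rintro x hx hx'
  simp only [Set.mem_iUnion, Set.mem_setOf_eq] at hx'
  obtain ⟨i, hij, hxi⟩ := hx'
  exact (Set.disjoint_left.1 (ht hij)) hxi hx

variable {n : ℕ} (a c b : Fin n → ℕ)

lemma one_not_mem_intervalIdeal : (1 : PS k n) ∉ intervalIdeal k a c b := by
  intro h
  have hle : intervalIdeal k a c b ≤ RingHom.ker (constantCoeff (σ := Fin n) (R := k)) := by
    rw [intervalIdeal, Ideal.span_le]
    rintro p ⟨i, hi, rfl⟩
    simp [RingHom.mem_ker, constantCoeff_X]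
  have := hle h
  rw [RingHom.mem_ker, map_one] at this
  exact one_ne_zero this

lemma intervalMod_nontrivial :
    (Ideal.Quotient.mk (intervalIdeal k a c b) (1 : PS k n)) ≠ 0 := by
  rw [Ne, Ideal.Quotient.eq_zero_iff_mem]
  exact one_not_mem_intervalIdeal a c b

lemma smul_comm_quot (r : k) (p : PS k n) (x : IntervalMod k a c b) :
    p • (r • x) = r • (p • x) := by
  haveI : SMulCommClass k (PS k n) (IntervalMod k a c b) := IsScalarTower.to_smulCommClass
  exact smul_comm p r x

end Aux3
section Aux4

variable {k : Type} [Field k] {n : ℕ} (a c b : Fin n → ℕ)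

/-- The bound exponent vector. -/
noncomputable def uu : Fin n →₀ ℕ := toFs (fun j => if b j < a j then b j - c j else 0)

/-- The set of free variables. -/
def Zset : Finset (Fin n) := Finset.univ.filter (fun j => a j ≤ b j)

lemma mem_Zset {j : Fin n} : j ∈ Zset a b ↔ ¬ b j < a j := by
  simp [Zset, not_lt]

lemma Zset_card : (Zset a b).card = suppCardA a b := rfl

lemma smul_mk_monomial (bb e : Fin n →₀ ℕ) :
    (monomial bb (1:k) : PS k n) • Ideal.Quotient.mk (intervalIdeal k a c b) (monomial e (1:k))
      = Ideal.Quotient.mk (intervalIdeal k a c b) (monomial (bb + e) (1:k)) := by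
  show Ideal.Quotient.mk _ (monomial bb (1:k) * monomial e (1:k)) = _
  rw [monomial_mul, one_mul]

lemma red_of_le_uu {e bb : Fin n →₀ ℕ} (he : e ≤ uu a c b)
    (hbb : ∀ j ∈ bb.support, j ∈ Zset a b) : bb + e ∈ RedSet a c b := by
  intro j hj
  have hbbj : bb j = 0 := by
    by_contra h
    exact (mem_Zset a b).1 (hbb j (Finsupp.mem_support_iff.2 h)) hj
  have huj : uu a c b j = b j - c j := by simp [uu, if_pos hj]
  have := Finsupp.le_def.1 he j
  rw [huj] at this
  simp [Finsupp.add_apply, hbbj]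
  omega

/-- The canonical Stanley decomposition of the interval module. -/
noncomputable def stdDecomp (grI : MGrading k n (IntervalMod k a c b))
    (hI : ∀ d, grI.piece d = intervalPiece k a c b d) : StanleyDecomp grI := by
  classical
  refine
  { s := (Finset.Iic (uu a c b)).card
    elem := fun i =>
      Ideal.Quotient.mk (intervalIdeal k a c b)
        (monomial (((Finset.Iic (uu a c b)).equivFin.symm i : _) : Fin n →₀ ℕ) (1:k))
    deg := fun i => natDeg (fun j => c j +
      (((Finset.Iic (uu a c b)).equivFin.symm i : _) : Fin n →₀ ℕ) j)
    Z := fun _ => Zset a b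
    homog := ?_, free := ?_, indep := ?_, total := ?_ }
  all_goals
    set E := Finset.Iic (uu a c b) with hE
    set ee : Fin E.card → (Fin n →₀ ℕ) := fun i => ((E.equivFin.symm i : _) : Fin n →₀ ℕ)
      with hee
  · -- homog
    intro i
    rw [hI]
    refine Submodule.subset_span ⟨ee i, fun j => ?_, rfl⟩
    simp [natDeg]
    rfl
  · -- free
    intro i
    have hle : ee i ≤ uu a c b := Finset.mem_Iic.1 (E.equivFin.symm i).2
    set h : {bb : Fin n →₀ ℕ // ∀ j ∈ bb.support, j ∈ Zset a b} → RedSet a c b :=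
      fun bb => ⟨bb.1 + ee i, red_of_le_uu a c b hle bb.2⟩ with hh
    have hinj : Function.Injective h := by
      intro x y hxy
      apply Subtype.ext
      have := congrArg Subtype.val hxy
      simpa [hh] using this
    have hli := (BB_linearIndependent k a c b).comp h hinj
    have hfe : (BB k a c b ∘ h) = fun bb : {bb : Fin n →₀ ℕ // ∀ j ∈ bb.support, j ∈ Zset a b} =>
        (monomial bb.1 (1:k) : PS k n) •
          Ideal.Quotient.mk (intervalIdeal k a c b) (monomial (ee i) (1:k)) := by
      funext bb
      rw [Function.comp_apply, smul_mk_monomial]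
      rfl
    rwa [hfe] at hli
  · -- indep
    set t : Fin E.card → Set (RedSet a c b) :=
      fun i => {g | ∀ j, b j < a j → (g : Fin n →₀ ℕ) j = ee i j} with htdef
    have hee_inj : Function.Injective ee :=
      Subtype.val_injective.comp E.equivFin.symm.injective
    have hpair : Pairwise (Function.onFun Disjoint t) := by
      intro i i' hii'
      rw [Function.onFun, Set.disjoint_left]
      rintro g hg hg'
      apply hii'
      apply hee_inj
      ext j
      by_cases hj : b j < a j
      · rw [← hg j hj, ← hg' j hj]
      · have h1 : uu a c b j = 0 := by simp [uu, if_neg hj]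
        have h2 : ee i j ≤ uu a c b j := Finsupp.le_def.1 (Finset.mem_Iic.1 (E.equivFin.symm i).2) j
        have h3 : ee i' j ≤ uu a c b j := Finsupp.le_def.1 (Finset.mem_Iic.1 (E.equivFin.symm i').2) j
        rw [h1, Nat.le_zero] at h2 h3
        rw [h2, h3]
    have hmain := indep_span_of_li (BB_linearIndependent k a c b) hpair
    refine hmain.mono fun i => ?_
    rw [stanleySub, Submodule.span_le]
    rintro y ⟨bb, hsupp, rfl⟩
    have hle : ee i ≤ uu a c b := Finset.mem_Iic.1 (E.equivFin.symm i).2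
    have hred := red_of_le_uu a c b hle hsupp
    refine Submodule.subset_span ⟨⟨bb + ee i, hred⟩, ?_, ?_⟩
    · intro j hj
      have hbbj : bb j = 0 := by
        by_contra h
        exact (mem_Zset a b).1 (hsupp j (Finsupp.mem_support_iff.2 h)) hj
      simp [Finsupp.add_apply, hbbj]
    · rw [smul_mk_monomial]; rfl
  · -- total
    rw [eq_top_iff, ← span_BB_eq_top k a c b, Submodule.span_le]
    rintro _ ⟨⟨g, hg⟩, rfl⟩
    set eg : Fin n →₀ ℕ := toFs (fun j => if b j < a j then g j else 0) with hegdef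
    set bg : Fin n →₀ ℕ := toFs (fun j => if b j < a j then 0 else g j) with hbgdef
    have hegE : eg ∈ E := by
      rw [hE, Finset.mem_Iic, Finsupp.le_def]
      intro j
      by_cases hj : b j < a j
      · simp only [hegdef, toFs_apply, if_pos hj, uu, hg j hj]
      · simp [hegdef, uu, if_neg hj]
    set i : Fin E.card := E.equivFin ⟨eg, hegE⟩ with hi
    have heei : ee i = eg := by
      show ((E.equivFin.symm (E.equivFin ⟨eg, hegE⟩) : _) : Fin n →₀ ℕ) = eg
      rw [Equiv.symm_apply_apply]
    have hdecomp : bg + eg = g := by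
      ext j
      by_cases hj : b j < a j <;> simp [hbgdef, hegdef, Finsupp.add_apply, hj]
    have : BB k a c b ⟨g, hg⟩ ∈ stanleySub (k := k)
        (Ideal.Quotient.mk (intervalIdeal k a c b) (monomial (ee i) (1:k))) (Zset a b) := by
      refine Submodule.subset_span ⟨bg, ?_, ?_⟩
      · intro j hj
        rw [mem_Zset]
        intro hlt
        have : bg j = 0 := by simp [hbgdef, if_pos hlt]
        exact Finsupp.mem_support_iff.1 hj this
      · rw [smul_mk_monomial, heei, hdecomp]; rfl
    exact le_iSup (fun i => stanleySub (k := k)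
      (Ideal.Quotient.mk (intervalIdeal k a c b) (monomial (ee i) (1:k))) (Zset a b)) i this

end Aux4
section Aux5

variable {k : Type} [Field k] {n : ℕ} (a c b : Fin n → ℕ)

lemma sdecomp_s_pos (grI : MGrading k n (IntervalMod k a c b))
    (D : StanleyDecomp grI) : 0 < D.s := by
  by_contra h
  push_neg at h
  rw [Nat.le_zero] at h
  haveI : IsEmpty (Fin D.s) := ⟨fun x => absurd x.isLt (by omega)⟩
  have htot := D.total
  rw [iSup_of_empty] at htot
  have h1 : Ideal.Quotient.mk (intervalIdeal k a c b) (1 : PS k n) ∈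
      (⊥ : Submodule k (IntervalMod k a c b)) := htot ▸ Submodule.mem_top
  rw [Submodule.mem_bot] at h1
  exact intervalMod_nontrivial a c b h1

lemma card_Z_le (grI : MGrading k n (IntervalMod k a c b))
    (hI : ∀ d, grI.piece d = intervalPiece k a c b d)
    (D : StanleyDecomp grI) (i : Fin D.s) : (D.Z i).card ≤ suppCardA a b := by
  rw [← Zset_card]
  refine Finset.card_le_card fun j hj => ?_
  rw [mem_Zset]
  intro hlt
  have hfree := D.free i
  have h0 : D.elem i ≠ 0 := by
    have hne := hfree.ne_zero ⟨0, by simp⟩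
    simpa [monomial_zero'] using hne
  have hhom := D.homog i
  rw [hI, intervalPiece] at hhom
  by_cases hex : ∃ e : Fin n →₀ ℕ, ∀ j', D.deg i j' = c j' + e j'
  · obtain ⟨e₀, he₀⟩ := hex
    have hsub : {y | ∃ e : Fin n →₀ ℕ, (∀ j', D.deg i j' = c j' + e j') ∧
        y = Ideal.Quotient.mk (intervalIdeal k a c b) (monomial e (1:k))} ⊆
        {Ideal.Quotient.mk (intervalIdeal k a c b) (monomial e₀ (1:k))} := by
      rintro y ⟨e, he, rfl⟩
      have : e = e₀ := by
        ext j'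
        have h1 := he j'
        have h2 := he₀ j'
        omega
      rw [this]; rfl
    have hmem := Submodule.span_mono hsub hhom
    obtain ⟨r, hr⟩ := Submodule.mem_span_singleton.1 hmem
    set bb : Fin n →₀ ℕ := Finsupp.single j (b j - c j + 1) with hbb
    have hsupp : ∀ j' ∈ bb.support, j' ∈ D.Z i := by
      intro j' hj'
      have := Finsupp.support_single_subset hj'
      rw [Finset.mem_singleton] at this
      rwa [this]
    have hne := hfree.ne_zero ⟨bb, hsupp⟩
    apply hne
    show (monomial bb (1:k) : PS k n) • D.elem i = 0
    rw [← hr, smul_comm_quot, smul_mk_monomial]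
    have hz : Ideal.Quotient.mk (intervalIdeal k a c b) (monomial (bb + e₀) (1:k)) = 0 := by
      refine mk_monomial_eq_zero a c b hlt ?_
      rw [Finsupp.add_apply, hbb, Finsupp.single_eq_same]
      omega
    rw [hz, smul_zero]
  · exfalso
    apply h0
    have hempty : {y | ∃ e : Fin n →₀ ℕ, (∀ j', D.deg i j' = c j' + e j') ∧
        y = Ideal.Quotient.mk (intervalIdeal k a c b) (monomial e (1:k))} = ∅ := by
      rw [Set.eq_empty_iff_forall_notMem]
      rintro y ⟨e, he, rfl⟩
      exact hex ⟨e, he⟩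
    rw [hempty, Submodule.span_empty, Submodule.mem_bot] at hhom
    exact hhom

end Aux5
theorem stmt4' (k : Type) [Field k] (n : ℕ) (a c b : Fin n → ℕ)
    (hcb : ∀ i, c i ≤ b i) (hba : ∀ i, b i ≤ a i)
    (grI : MGrading k n (IntervalMod k a c b))
    (hI : ∀ d, grI.piece d = intervalPiece k a c b d) :
    sdepth grI = suppCardA a b := by
  rw [sdepth]
  have hmem : suppCardA a b ∈ {d | ∃ D : StanleyDecomp grI, ∀ i, d ≤ (D.Z i).card} := by
    refine ⟨stdDecomp a c b grI hI, fun i => ?_⟩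
    show suppCardA a b ≤ (Zset a b).card
    rw [Zset_card]
  have hub : ∀ x ∈ {d | ∃ D : StanleyDecomp grI, ∀ i, d ≤ (D.Z i).card},
      x ≤ suppCardA a b := by
    rintro x ⟨D, hD⟩
    have hpos := sdecomp_s_pos a c b grI D
    exact (hD ⟨0, hpos⟩).trans (card_Z_le a c b grI hI D ⟨0, hpos⟩)
  exact le_antisymm (csSup_le ⟨_, hmem⟩ hub) (le_csSup ⟨suppCardA a b, hub⟩ hmem)
theorem stmt4 (k : Type) [Field k] (n : ℕ) (a c b : Fin n → ℕ)
    (hcb : ∀ i, c i ≤ b i) (hba : ∀ i, b i ≤ a i)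
    (grI : MGrading k n (IntervalMod k a c b))
    (hI : ∀ d, grI.piece d = intervalPiece k a c b d) :
    sdepth grI = suppCardA a b := by
  exact stmt4' k n a c b hcb hba grI hI
end
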